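/- Let h, h' in N^T with h' majorized by h, and r in N^N. If there exists an N×T (0,1)-matrix with row sums r and column sums h, then there exists an N×T (0,1)-matrix with row sums r and column sums h'. -/

import Mathlib

/-- Sum of the `k` largest entries of `x` (padding with zeros if `k` exceeds the length). -/
def topSum {N : ℕ} (x : Fin N → ℕ) (k : ℕ) : ℕ :=
  (Finset.univ.powerset.filter (fun S : Finset (Fin N) => S.card ≤ k)).sup
    (fun S => ∑ i ∈ S, x i)

open Finset

lemma sum_le_topSum {T : ℕ} (x : Fin T → ℕ) {k : ℕ} {S : Finset (Fin T)} (hS : S.card ≤ k) :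
    ∑ i ∈ S, x i ≤ topSum x k := by
  apply Finset.le_sup (f := fun S => ∑ i ∈ S, x i)
  simp [Finset.mem_filter, hS]

lemma topSum_le {T : ℕ} (x : Fin T → ℕ) (k m : ℕ)
    (H : ∀ S : Finset (Fin T), S.card ≤ k → ∑ i ∈ S, x i ≤ m) : topSum x k ≤ m := by
  apply Finset.sup_le
  intro S hS
  exact H S (by simpa using (Finset.mem_filter.mp hS).2)

lemma topSum_comp_perm_le {T : ℕ} (x : Fin T → ℕ) (σ : Equiv.Perm (Fin T)) (k : ℕ) :
    topSum (x ∘ σ) k ≤ topSum x k := by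
  apply topSum_le
  intro S hS
  have : ∑ i ∈ S, x (σ i) = ∑ j ∈ S.image σ, x j :=
    (Finset.sum_image (fun a _ b _ hab => σ.injective hab)).symm
  rw [show (x ∘ σ) = fun i => x (σ i) from rfl]
  calc ∑ i ∈ S, x (σ i) = ∑ j ∈ S.image σ, x j := this
    _ ≤ topSum x k := sum_le_topSum x (le_trans Finset.card_image_le hS)

lemma topSum_comp_perm {T : ℕ} (x : Fin T → ℕ) (σ : Equiv.Perm (Fin T)) (k : ℕ) :
    topSum (x ∘ σ) k = topSum x k := by
  refine le_antisymm (topSum_comp_perm_le x σ k) ?_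
  have : x = (x ∘ σ) ∘ σ.symm := by funext i; simp
  nth_rewrite 1 [this]
  exact topSum_comp_perm_le (x ∘ σ) σ.symm k

def Pref (T k : ℕ) : Finset (Fin T) := Finset.univ.filter (fun i : Fin T => (i : ℕ) < k)

lemma mem_Pref {T k : ℕ} {i : Fin T} : i ∈ Pref T k ↔ (i : ℕ) < k := by
  simp [Pref]

lemma card_Pref_le (T k : ℕ) : (Pref T k).card ≤ k := by
  have := Finset.card_le_card_of_injOn (fun i : Fin T => (i : ℕ))
    (s := Pref T k) (t := Finset.range k)
    (fun a ha => by simpa using (mem_Pref.mp ha))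
    (fun a _ b _ hab => Fin.val_injective hab)
  simpa using this

lemma Pref_mono (T : ℕ) {k l : ℕ} (h : k ≤ l) : Pref T k ⊆ Pref T l := by
  intro i hi; exact mem_Pref.mpr (lt_of_lt_of_le (mem_Pref.mp hi) h)

-- key: for antitone x, any set of card ≤ k is dominated by the prefix
lemma sum_le_prefix {T : ℕ} (x : Fin T → ℕ) (hx : Antitone x) :
    ∀ (k : ℕ) (S : Finset (Fin T)), S.card ≤ k → ∑ i ∈ S, x i ≤ ∑ i ∈ Pref T k, x i := by
  intro k
  induction k with
  | zero => intro S hS; simp [Finset.card_eq_zero.mp (Nat.le_zero.mp hS)]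
  | succ k ih =>
    intro S hS
    rcases Nat.lt_or_ge S.card (k+1) with hlt | hge
    · exact le_trans (ih S (Nat.lt_succ_iff.mp hlt))
        (Finset.sum_le_sum_of_subset (Pref_mono T (Nat.le_succ k)))
    · have hcard : S.card = k + 1 := le_antisymm hS hge
      have hne : S.Nonempty := Finset.card_pos.mp (by omega)
      set s := S.max' hne with hs
      have hsmem : s ∈ S := S.max'_mem hne
      -- k ≤ s.val
      have hsub : S ⊆ Pref T ((s : ℕ) + 1) := by
        intro i hi
        exact mem_Pref.mpr (by have := S.le_max' i hi; omega)
      have hks : k ≤ (s : ℕ) := by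
        have := le_trans (Finset.card_le_card hsub) (card_Pref_le T ((s:ℕ)+1))
        omega
      have hkT : k < T := lt_of_le_of_lt hks s.isLt
      have hPsucc : Pref T (k+1) = insert ⟨k, hkT⟩ (Pref T k) := by
        ext i
        simp only [mem_Pref, Finset.mem_insert]
        constructor
        · intro hi
          rcases Nat.lt_or_ge (i : ℕ) k with h' | h'
          · exact Or.inr h'
          · refine Or.inl (Fin.ext ?_)
            simp only []
            omega
        · rintro (rfl | hi)
          · simp
          · exact Nat.lt_succ_of_lt hi
      have hknotm : (⟨k, hkT⟩ : Fin T) ∉ Pref T k := by simp [mem_Pref]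
      have hxs : x s ≤ x ⟨k, hkT⟩ := hx (by simpa [Fin.le_def] using hks)
      have herase : (S.erase s).card ≤ k := by
        rw [Finset.card_erase_of_mem hsmem]; omega
      calc ∑ i ∈ S, x i = x s + ∑ i ∈ S.erase s, x i :=
            (Finset.add_sum_erase S x hsmem).symm
        _ ≤ x ⟨k, hkT⟩ + ∑ i ∈ Pref T k, x i := add_le_add hxs (ih _ herase)
        _ = ∑ i ∈ Pref T (k+1), x i := by
            rw [hPsucc, Finset.sum_insert hknotm]

lemma topSum_antitone {T : ℕ} (x : Fin T → ℕ) (hx : Antitone x) (k : ℕ) :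
    topSum x k = ∑ i ∈ Pref T k, x i := by
  refine le_antisymm (topSum_le x k _ (fun S hS => sum_le_prefix x hx k S hS)) ?_
  exact sum_le_topSum x (card_Pref_le T k)

def ExMat (N T : ℕ) (r : Fin N → ℕ) (c : Fin T → ℕ) : Prop :=
  ∃ A : Fin N → Fin T → ℕ,
    (∀ n j, A n j ≤ 1) ∧ (∀ n, ∑ j, A n j = r n) ∧ (∀ j, ∑ n, A n j = c j)

lemma ExMat.transfer {N T : ℕ} {r : Fin N → ℕ} {c : Fin T → ℕ} {a b : Fin T}
    (hab : a ≠ b) (hcb : c b < c a) (H : ExMat N T r c) :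
    ExMat N T r (fun j => if j = a then c a - 1 else if j = b then c b + 1 else c j) := by
  obtain ⟨A, h01, hrow, hcol⟩ := H
  -- find a row n with A n a = 1, A n b = 0
  have : ∃ n, A n b < A n a := by
    by_contra hcon
    push_neg at hcon
    have : ∑ n, A n a ≤ ∑ n, A n b := Finset.sum_le_sum (fun n _ => hcon n)
    rw [hcol a, hcol b] at this; omega
  obtain ⟨n, hn⟩ := this
  have hna : A n a = 1 := le_antisymm (h01 n a) (by have := h01 n b; omega)
  have hnb : A n b = 0 := by have := h01 n b; omega
  set R : Fin T → ℕ := Function.update (Function.update (A n) a 0) b 1 with hR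
  have hRa : R a = 0 := by
    rw [hR, Function.update_of_ne hab, Function.update_self]
  have hRb : R b = 1 := by rw [hR, Function.update_self]
  have hRo : ∀ j, j ≠ a → j ≠ b → R j = A n j := by
    intro j hja hjb
    rw [hR, Function.update_of_ne hjb, Function.update_of_ne hja]
  refine ⟨Function.update A n R, ?_, ?_, ?_⟩
  · intro m j
    rcases eq_or_ne m n with rfl | hm
    · rw [Function.update_self]
      rcases eq_or_ne j a with rfl | hja
      · simp [hRa]
      rcases eq_or_ne j b with rfl | hjb
      · simp [hRb]
      · rw [hRo j hja hjb]; exact h01 m j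
    · rw [Function.update_of_ne hm]; exact h01 m j
  · intro m
    rcases eq_or_ne m n with rfl | hm
    · rw [Function.update_self, ← hrow m]
      have hbmem : b ∈ (Finset.univ : Finset (Fin T)) := Finset.mem_univ b
      have hamem : a ∈ (Finset.univ : Finset (Fin T)).erase b := by
        simp [hab]
      calc ∑ j, R j = R b + ∑ j ∈ Finset.univ.erase b, R j :=
            (Finset.add_sum_erase _ R hbmem).symm
        _ = R b + (R a + ∑ j ∈ (Finset.univ.erase b).erase a, R j) := by
            rw [Finset.add_sum_erase _ R hamem]
        _ = 1 + (0 + ∑ j ∈ (Finset.univ.erase b).erase a, A m j) := by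
            rw [hRa, hRb]
            congr 1
            congr 1
            apply Finset.sum_congr rfl
            intro j hj
            simp only [Finset.mem_erase] at hj
            exact hRo j hj.1 hj.2.1
        _ = A m b + (A m a + ∑ j ∈ (Finset.univ.erase b).erase a, A m j) := by
            rw [hna, hnb]; ring
        _ = ∑ j, A m j := by
            rw [← Finset.add_sum_erase _ (A m) hbmem, ← Finset.add_sum_erase _ (A m) hamem]
    · rw [Function.update_of_ne hm]; exact hrow m
  · intro j
    have key : ∀ j, ∑ m, Function.update A n R m j = R j + ∑ m ∈ Finset.univ.erase n, A m j := by
      intro j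
      have : (fun m => Function.update A n R m j) = Function.update (fun m => A m j) n (R j) := by
        funext m
        rcases eq_or_ne m n with rfl | hm
        · simp
        · simp [Function.update_of_ne hm]
      rw [this]
      rw [Finset.sum_update_of_mem (Finset.mem_univ n)]
      congr 1
      rw [Finset.sdiff_singleton_eq_erase]
    have orig : ∀ j, ∑ m, A m j = A n j + ∑ m ∈ Finset.univ.erase n, A m j := by
      intro j
      exact (Finset.add_sum_erase _ (fun m => A m j) (Finset.mem_univ n)).symm
    change ∑ m, Function.update A n R m j = if j = a then c a - 1 else if j = b then c b + 1 else c j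
    rcases eq_or_ne j a with rfl | hja
    · rw [if_pos rfl]
      have h1 := key j; have h2 := orig j
      rw [hcol j] at h2
      rw [h1, hRa]; omega
    rcases eq_or_ne j b with rfl | hjb
    · rw [if_neg hja, if_pos rfl]
      have h1 := key j; have h2 := orig j
      rw [hcol j] at h2
      rw [h1, hRb]; omega
    · rw [if_neg hja, if_neg hjb]
      have h1 := key j; have h2 := orig j
      rw [hcol j] at h2
      rw [h1, hRo j hja hjb]; omega

lemma main_induction {N T : ℕ} (r : Fin N → ℕ) :
    ∀ (d : ℕ) (h h' : Fin T → ℕ), Antitone h → Antitone h' →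
    (∑ j, h' j = ∑ j, h j) → (∀ k, topSum h' k ≤ topSum h k) →
    (∑ j, ((h j - h' j) + (h' j - h j))) ≤ d →
    ExMat N T r h → ExMat N T r h' := by
  intro d
  induction d with
  | zero =>
    intro h h' _ _ _ _ hd hex
    have hz : ∀ j ∈ (Finset.univ : Finset (Fin T)), ((h j - h' j) + (h' j - h j)) = 0 := by
      rw [← Finset.sum_eq_zero_iff]
      omega
    have : h = h' := by
      funext j
      have := hz j (Finset.mem_univ j)
      omega
    rwa [← this]
  | succ d ih =>
    intro h h' hh hh' hsum hmaj hd hex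
    by_cases heq : h = h'
    · rwa [← heq]
    -- first discrepancy a₀
    have hDne : (Finset.univ.filter (fun i : Fin T => h i ≠ h' i)).Nonempty := by
      by_contra hcon
      apply heq
      funext j
      by_contra hj
      exact hcon ⟨j, Finset.mem_filter.mpr ⟨Finset.mem_univ j, hj⟩⟩
    set Dset := Finset.univ.filter (fun i : Fin T => h i ≠ h' i) with hDset
    set a₀ := Dset.min' hDne with ha₀
    have ha₀mem : a₀ ∈ Dset := Dset.min'_mem hDne
    have ha₀ne : h a₀ ≠ h' a₀ := (Finset.mem_filter.mp ha₀mem).2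
    have hbefore : ∀ i : Fin T, i < a₀ → h i = h' i := by
      intro i hi
      by_contra hne
      have : a₀ ≤ i := Dset.min'_le i (Finset.mem_filter.mpr ⟨Finset.mem_univ i, hne⟩)
      exact absurd (lt_of_lt_of_le hi this) (lt_irrefl i)
    -- h' a₀ < h a₀
    have hstep1 : h' a₀ < h a₀ := by
      have e1 : ∑ i ∈ Pref T ((a₀ : ℕ) + 1), h' i ≤ ∑ i ∈ Pref T ((a₀ : ℕ) + 1), h i := by
        rw [← topSum_antitone h' hh', ← topSum_antitone h hh]
        exact hmaj _
      have ha₀p : a₀ ∈ Pref T ((a₀ : ℕ) + 1) := mem_Pref.mpr (Nat.lt_succ_self _)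
      have eh' : ∑ i ∈ Pref T ((a₀ : ℕ) + 1), h' i
          = h' a₀ + ∑ i ∈ (Pref T ((a₀ : ℕ) + 1)).erase a₀, h' i :=
        (Finset.add_sum_erase _ h' ha₀p).symm
      have eh : ∑ i ∈ Pref T ((a₀ : ℕ) + 1), h i
          = h a₀ + ∑ i ∈ (Pref T ((a₀ : ℕ) + 1)).erase a₀, h i :=
        (Finset.add_sum_erase _ h ha₀p).symm
      have erest : ∑ i ∈ (Pref T ((a₀ : ℕ) + 1)).erase a₀, h' i
          = ∑ i ∈ (Pref T ((a₀ : ℕ) + 1)).erase a₀, h i := by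
        apply Finset.sum_congr rfl
        intro i hi
        rcases Finset.mem_erase.mp hi with ⟨hine, hip⟩
        have : (i : ℕ) < (a₀ : ℕ) := by
          have h2 := mem_Pref.mp hip
          have h3 : (i : ℕ) ≠ (a₀ : ℕ) := fun hc => hine (Fin.ext hc)
          omega
        exact (hbefore i (Fin.lt_def.mpr this)).symm
      rw [eh', eh, erest] at e1
      omega
    -- first index where h' exceeds h
    have hEne : (Finset.univ.filter (fun i : Fin T => h i < h' i)).Nonempty := by
      by_contra hcon
      have hle : ∀ i ∈ (Finset.univ : Finset (Fin T)), h' i ≤ h i := by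
        intro i _
        by_contra hlt
        exact hcon ⟨i, Finset.mem_filter.mpr ⟨Finset.mem_univ i, by omega⟩⟩
      have := (Finset.sum_eq_sum_iff_of_le hle).mp hsum
      exact ha₀ne ((this a₀ (Finset.mem_univ a₀)).symm)
    clear_value a₀
    set Eset := Finset.univ.filter (fun i : Fin T => h i < h' i) with hEset
    set b₀ := Eset.min' hEne with hb₀
    have hb₀mem : h b₀ < h' b₀ := (Finset.mem_filter.mp (Eset.min'_mem hEne)).2
    have hEmin : ∀ i : Fin T, h i < h' i → b₀ ≤ i := by
      intro i hi
      exact Eset.min'_le i (Finset.mem_filter.mpr ⟨Finset.mem_univ i, hi⟩)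
    clear_value b₀
    have ha₀b₀ : a₀ < b₀ := by
      rcases lt_trichotomy a₀ b₀ with hlt | heq2 | hgt
      · exact hlt
      · rw [heq2] at hstep1; omega
      · have := hbefore b₀ hgt; omega
    -- define a and b
    have hAne : (Finset.univ.filter (fun i : Fin T => h i = h a₀)).Nonempty :=
      ⟨a₀, Finset.mem_filter.mpr ⟨Finset.mem_univ _, rfl⟩⟩
    set Aset := Finset.univ.filter (fun i : Fin T => h i = h a₀) with hAset
    set a := Aset.max' hAne with ha
    have hamem : h a = h a₀ := (Finset.mem_filter.mp (Aset.max'_mem hAne)).2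
    have hAmax : ∀ i : Fin T, h i = h a₀ → i ≤ a := by
      intro i hi
      exact Finset.le_max' Aset i (Finset.mem_filter.mpr ⟨Finset.mem_univ _, hi⟩)
    have ha₀a : a₀ ≤ a := hAmax a₀ rfl
    clear_value a
    have hBne : (Finset.univ.filter (fun i : Fin T => h i = h b₀)).Nonempty :=
      ⟨b₀, Finset.mem_filter.mpr ⟨Finset.mem_univ _, rfl⟩⟩
    set Bset := Finset.univ.filter (fun i : Fin T => h i = h b₀) with hBset
    set b := Bset.min' hBne with hb
    have hbmem : h b = h b₀ := (Finset.mem_filter.mp (Bset.min'_mem hBne)).2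
    have hBmin : ∀ i : Fin T, h i = h b₀ → b ≤ i := by
      intro i hi
      exact Finset.min'_le Bset i (Finset.mem_filter.mpr ⟨Finset.mem_univ _, hi⟩)
    have hbb₀ : b ≤ b₀ := hBmin b₀ rfl
    clear_value b
    set v := h a₀ with hv
    set w := h b₀ with hw
    -- key inequalities
    have hh'a : h' a < v := lt_of_le_of_lt (hh' ha₀a) hstep1
    have hh'b : w < h' b := lt_of_lt_of_le hb₀mem (hh' hbb₀)
    have hvw : w + 2 ≤ v := by
      have h1 : h' b₀ ≤ h' a₀ := hh' (le_of_lt ha₀b₀)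
      omega
    have hab : a < b := by
      by_contra hcon
      push_neg at hcon
      have := hh hcon  -- h a ≤ h b
      rw [hamem, hbmem] at this
      omega
    have hgta : ∀ i : Fin T, a < i → h i ≤ v - 1 := by
      intro i hi
      have h1 : h i ≤ v := by have := hh (le_of_lt hi); rwa [hamem] at this
      have h2 : h i ≠ v := by
        intro hc
        have : i ≤ a := hAmax i hc
        exact absurd (lt_of_lt_of_le hi this) (lt_irrefl _)
      omega
    have hltb : ∀ i : Fin T, i < b → w + 1 ≤ h i := by
      intro i hi
      have h1 : w ≤ h i := by have := hh (le_of_lt hi); rwa [hbmem] at this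
      have h2 : h i ≠ w := by
        intro hc
        have : b ≤ i := hBmin i hc
        exact absurd (lt_of_lt_of_le hi this) (lt_irrefl i)
      omega
    have hltb' : ∀ i : Fin T, i < b → h' i ≤ h i := by
      intro i hi
      by_contra hcon
      have hb₀i : b₀ ≤ i := hEmin i (by omega)
      have : b ≤ i := le_trans hbb₀ hb₀i
      exact absurd (lt_of_lt_of_le hi this) (lt_irrefl i)
    -- the transfer target
    set g : Fin T → ℕ := fun j => if j = a then h a - 1 else if j = b then h b + 1 else h j with hg
    have hga : g a = v - 1 := by rw [hg]; simp [hamem]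
    have hgb : g b = w + 1 := by
      simp [hg, Ne.symm (ne_of_lt hab), hbmem]
    have hgo : ∀ i : Fin T, i ≠ a → i ≠ b → g i = h i := by
      intro i h1 h2
      simp [hg, h1, h2]
    -- bounds for g
    have hC1 : ∀ i : Fin T, i ≤ a → v - 1 ≤ g i := by
      intro i hi
      rcases eq_or_lt_of_le hi with rfl | hi'
      · omega
      · have := hgo i (ne_of_lt hi') (ne_of_lt (lt_trans hi' hab))
        have h2 : v ≤ h i := by have := hh hi; rwa [hamem] at this
        omega
    have hC2 : ∀ i : Fin T, a ≤ i → g i ≤ v - 1 := by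
      intro i hi
      rcases eq_or_lt_of_le hi with rfl | hi'
      · omega
      · rcases eq_or_ne i b with rfl | hib
        · omega
        · have := hgo i (Ne.symm (ne_of_lt hi')) hib
          have h2 := hgta i hi'
          omega
    have hC3 : ∀ i : Fin T, i ≤ b → w + 1 ≤ g i := by
      intro i hi
      rcases eq_or_lt_of_le hi with rfl | hi'
      · omega
      · rcases eq_or_ne i a with rfl | hia
        · omega
        · have := hgo i hia (ne_of_lt hi')
          have h2 := hltb i hi'
          omega
    have hC4 : ∀ i : Fin T, b ≤ i → g i ≤ w + 1 := by
      intro i hi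
      rcases eq_or_lt_of_le hi with rfl | hi'
      · omega
      · have := hgo i (Ne.symm (ne_of_lt (lt_trans hab hi'))) (Ne.symm (ne_of_lt hi'))
        have h2 : h i ≤ w := by have := hh (le_of_lt hi'); rwa [hbmem] at this
        omega
    have hganti : Antitone g := by
      intro i j hij
      rcases le_or_gt a j with haj | haj
      · rcases le_or_gt i a with hia | hia
        · exact le_trans (hC2 j haj) (hC1 i hia)
        · rcases le_or_gt b j with hbj | hbj
          · rcases le_or_gt i b with hib | hib
            · exact le_trans (hC4 j hbj) (hC3 i hib)
            · rw [hgo i (ne_of_gt hia) (ne_of_gt hib),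
                hgo j (ne_of_gt (lt_of_lt_of_le hia hij)) (ne_of_gt (lt_of_lt_of_le hib hij))]
              exact hh hij
          · rw [hgo i (ne_of_gt hia) (ne_of_lt (lt_of_le_of_lt hij hbj)),
              hgo j (ne_of_gt (lt_of_lt_of_le hia hij)) (ne_of_lt hbj)]
            exact hh hij
      · rw [hgo i (ne_of_lt (lt_of_le_of_lt hij haj)) (ne_of_lt (lt_trans (lt_of_le_of_lt hij haj) hab)),
          hgo j (ne_of_lt haj) (ne_of_lt (lt_trans haj hab))]
        exact hh hij
    -- splitting sums at a and b
    have ersplit : ∀ (s : Finset (Fin T)) (f : Fin T → ℕ), a ∈ s → b ∈ s →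
        ∑ j ∈ s, f j = f a + (f b + ∑ j ∈ (s.erase a).erase b, f j) := by
      intro s f has hbs
      rw [← Finset.add_sum_erase _ f has,
        ← Finset.add_sum_erase _ f (Finset.mem_erase.mpr ⟨Ne.symm (ne_of_lt hab), hbs⟩)]
    have hrestuniv : ∑ j ∈ ((Finset.univ : Finset (Fin T)).erase a).erase b, g j
        = ∑ j ∈ ((Finset.univ : Finset (Fin T)).erase a).erase b, h j := by
      apply Finset.sum_congr rfl
      intro i hi
      rcases Finset.mem_erase.mp hi with ⟨hib, hi2⟩
      exact hgo i (Finset.mem_erase.mp hi2).1 hib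
    have hsumg : ∑ j, g j = ∑ j, h j := by
      rw [ersplit Finset.univ g (Finset.mem_univ a) (Finset.mem_univ b),
        ersplit Finset.univ h (Finset.mem_univ a) (Finset.mem_univ b),
        hrestuniv, hga, hgb, hamem, hbmem]
      omega
    -- preserved majorization
    have hmaj' : ∀ k, topSum h' k ≤ topSum g k := by
      intro k
      rw [topSum_antitone g hganti, topSum_antitone h' hh']
      have hmk := hmaj k
      rw [topSum_antitone h hh, topSum_antitone h' hh'] at hmk
      rcases le_or_gt k (a : ℕ) with hka | hka
      · have : ∑ i ∈ Pref T k, g i = ∑ i ∈ Pref T k, h i := by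
          apply Finset.sum_congr rfl
          intro i hi
          have hik := mem_Pref.mp hi
          have hia : i < a := Fin.lt_def.mpr (by omega)
          exact hgo i (ne_of_lt hia) (ne_of_lt (lt_trans hia hab))
        rw [this]; exact hmk
      · rcases le_or_gt k (b : ℕ) with hkb | hkb
        · -- a.val < k ≤ b.val
          have hap : a ∈ Pref T k := mem_Pref.mpr hka
          have hlt : ∑ i ∈ Pref T k, h' i < ∑ i ∈ Pref T k, h i := by
            apply Finset.sum_lt_sum
            · intro i hi
              have hik := mem_Pref.mp hi
              exact hltb' i (Fin.lt_def.mpr (by omega))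
            · exact ⟨a, hap, by rw [hamem]; exact hh'a⟩
          have hgs : ∑ i ∈ Pref T k, g i + 1 = ∑ i ∈ Pref T k, h i := by
            rw [← Finset.add_sum_erase _ g hap, ← Finset.add_sum_erase _ h hap]
            have : ∑ i ∈ (Pref T k).erase a, g i = ∑ i ∈ (Pref T k).erase a, h i := by
              apply Finset.sum_congr rfl
              intro i hi
              rcases Finset.mem_erase.mp hi with ⟨hia, hi2⟩
              have hik := mem_Pref.mp hi2
              exact hgo i hia (fun hc => by rw [hc] at hik; omega)
            rw [this, hga, hamem]
            omega
          omega
        · -- b.val < k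
          have hap : a ∈ Pref T k := mem_Pref.mpr (by omega)
          have hbp : b ∈ Pref T k := mem_Pref.mpr hkb
          have : ∑ i ∈ Pref T k, g i = ∑ i ∈ Pref T k, h i := by
            rw [ersplit _ g hap hbp, ersplit _ h hap hbp]
            have : ∑ i ∈ ((Pref T k).erase a).erase b, g i
                = ∑ i ∈ ((Pref T k).erase a).erase b, h i := by
              apply Finset.sum_congr rfl
              intro i hi
              rcases Finset.mem_erase.mp hi with ⟨hib, hi2⟩
              exact hgo i (Finset.mem_erase.mp hi2).1 hib
            rw [this, hga, hgb, hamem, hbmem]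
            omega
          rw [this]; exact hmk
    -- measure decreases
    have hmeas : ∑ j, ((g j - h' j) + (h' j - g j)) ≤ d := by
      have e1 := ersplit Finset.univ (fun j => (g j - h' j) + (h' j - g j))
        (Finset.mem_univ a) (Finset.mem_univ b)
      have e2 := ersplit Finset.univ (fun j => (h j - h' j) + (h' j - h j))
        (Finset.mem_univ a) (Finset.mem_univ b)
      have hrest2 : ∑ j ∈ ((Finset.univ : Finset (Fin T)).erase a).erase b,
          ((g j - h' j) + (h' j - g j))
          = ∑ j ∈ ((Finset.univ : Finset (Fin T)).erase a).erase b,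
          ((h j - h' j) + (h' j - h j)) := by
        apply Finset.sum_congr rfl
        intro i hi
        rcases Finset.mem_erase.mp hi with ⟨hib, hi2⟩
        rw [hgo i (Finset.mem_erase.mp hi2).1 hib]
      rw [e2] at hd
      rw [e1, hrest2]
      simp only [hga, hgb, hamem, hbmem] at hd ⊢
      omega
    -- transfer the matrix
    have hex2 : ExMat N T r g := by
      rw [hg]
      exact ExMat.transfer (ne_of_lt hab) (by rw [hamem, hbmem]; omega) hex
    exact ih g h' hganti hh' (by rw [hsumg]; exact hsum) hmaj' hmeas hex2


lemma ExMat.comp_perm {N T : ℕ} {r : Fin N → ℕ} {c : Fin T → ℕ} (σ : Equiv.Perm (Fin T))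
    (H : ExMat N T r c) : ExMat N T r (c ∘ σ) := by
  obtain ⟨A, h01, hrow, hcol⟩ := H
  refine ⟨fun n j => A n (σ j), fun n j => h01 n (σ j), ?_, ?_⟩
  · intro n
    rw [← hrow n]
    exact Equiv.sum_comp σ (A n)
  · intro j
    exact hcol (σ j)

lemma antitone_sorted {T : ℕ} (x : Fin T → ℕ) :
    Antitone (x ∘ (Fin.revPerm.trans (Tuple.sort x))) := by
  intro i j hij
  have := Tuple.monotone_sort x (Fin.rev_le_rev.mpr hij)
  simpa using this

/-- If a (0,1)-matrix with row sums `r` and column sums `h` exists and `h'` is majorized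
by `h`, then a (0,1)-matrix with row sums `r` and column sums `h'` also exists. -/
theorem zeroOne_exists_of_majorized (N T : ℕ) (h h' : Fin T → ℕ) (r : Fin N → ℕ)
    (hsum : ∑ j, h' j = ∑ j, h j)
    (hmaj : ∀ k, topSum h' k ≤ topSum h k) :
    (∃ A : Fin N → Fin T → ℕ,
        (∀ n j, A n j ≤ 1) ∧
        (∀ n, ∑ j, A n j = r n) ∧
        (∀ j, ∑ n, A n j = h j)) →
      (∃ A : Fin N → Fin T → ℕ,
        (∀ n j, A n j ≤ 1) ∧
        (∀ n, ∑ j, A n j = r n) ∧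
        (∀ j, ∑ n, A n j = h' j)) := by
  intro hex
  set σ : Equiv.Perm (Fin T) := Fin.revPerm.trans (Tuple.sort h) with hσ
  set σ' : Equiv.Perm (Fin T) := Fin.revPerm.trans (Tuple.sort h') with hσ'
  have hanti : Antitone (h ∘ σ) := antitone_sorted h
  have hanti' : Antitone (h' ∘ σ') := antitone_sorted h'
  have hex1 : ExMat N T r (h ∘ σ) := ExMat.comp_perm σ hex
  have hsum1 : ∑ j, (h' ∘ σ') j = ∑ j, (h ∘ σ) j := by
    rw [show ∑ j, (h' ∘ σ') j = ∑ j, h' (σ' j) from rfl,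
      show ∑ j, (h ∘ σ) j = ∑ j, h (σ j) from rfl,
      Equiv.sum_comp σ' h', Equiv.sum_comp σ h]
    exact hsum
  have hmaj1 : ∀ k, topSum (h' ∘ σ') k ≤ topSum (h ∘ σ) k := by
    intro k
    rw [topSum_comp_perm h' σ' k, topSum_comp_perm h σ k]
    exact hmaj k
  obtain ⟨B, hB1, hB2, hB3⟩ :=
    main_induction r (∑ j, (((h ∘ σ) j - (h' ∘ σ') j) + ((h' ∘ σ') j - (h ∘ σ) j)))
      (h ∘ σ) (h' ∘ σ') hanti hanti' hsum1 hmaj1 (le_refl _) hex1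
  refine ⟨fun n j => B n (σ'.symm j), fun n j => hB1 n (σ'.symm j), ?_, ?_⟩
  · intro n
    rw [← hB2 n]
    exact Equiv.sum_comp σ'.symm (B n)
  · intro j
    have := hB3 (σ'.symm j)
    simpa using this
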